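/- Let G = (V,D,B) be an acyclic mixed graph, let V' ⊆ V be an ancestral subset, and let (u,v) be an edge of the induced subgraph G_{V'}. If the coefficient of (u,v) is generically identifiable in G_{V'}, then the corresponding coefficient is generically identifiable in G; that is, there is a proper algebraic subset A of Θ_G such that any two parameter pairs in Θ_G ∖ A with the same image under φ_G agree in that coefficient. -/

import Mathlib

open scoped Classical Matrix

/-- The directed part of the graph contains no directed cycle. -/
def Acyclic {n : ℕ} (D : Finset (Fin n × Fin n)) : Prop :=
  ∀ v : Fin n, ¬ Relation.TransGen (fun a b => (a, b) ∈ D) v v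

/-- Mixed graph axioms: the bidirected edge set is symmetric and there are no self loops. -/
def IsMixedGraph {n : ℕ} (D B : Finset (Fin n × Fin n)) : Prop :=
  (∀ v w : Fin n, (v, w) ∈ B → (w, v) ∈ B) ∧ ∀ v : Fin n, (v, v) ∉ D ∧ (v, v) ∉ B

/-- `IsTrek D B v w L R`: `L` is the left side of a trek from `v` to `w`, listed from the top
node down to the source `v` (consecutive vertices joined by directed edges pointing towards
`v`); `R` is the right side, listed from the top down to the target `w`.  Either the two tops
coincide (no bidirected edge) or they are joined by a bidirected edge. -/
def IsTrek {n : ℕ} (D B : Finset (Fin n × Fin n)) (v w : Fin n)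
    (L R : List (Fin n)) : Prop :=
  L ≠ [] ∧ R ≠ [] ∧
    L.Chain' (fun a b => (a, b) ∈ D) ∧ R.Chain' (fun a b => (a, b) ∈ D) ∧
    L.getLast? = some v ∧ R.getLast? = some w ∧
    (L.head? = R.head? ∨
      ∃ u z : Fin n, L.head? = some u ∧ R.head? = some z ∧ (u, z) ∈ B)

/-- Product of the matrix entries `Λ x y` over the consecutive pairs `(x, y)` of a list,
i.e. the product of the directed-edge coefficients along a directed path. -/
noncomputable def edgeProd {n : ℕ} (Λ : Matrix (Fin n) (Fin n) ℝ) :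
    List (Fin n) → ℝ
  | [] => 1
  | [_] => 1
  | x :: y :: rest => Λ x y * edgeProd Λ (y :: rest)

/-- The trek monomial of the trek with sides `L`, `R`. -/
noncomputable def trekWeight {n : ℕ} (Λ Ω : Matrix (Fin n) (Fin n) ℝ)
    (L R : List (Fin n)) : ℝ :=
  (match L.head?, R.head? with
    | some u, some z => Ω u z
    | _, _ => 0) * edgeProd Λ L * edgeProd Λ R

/-- `u` is an ancestor of `v`: there is a (possibly empty) directed path from `u` to `v`. -/
def IsAncestor {n : ℕ} (D : Finset (Fin n × Fin n)) (u v : Fin n) : Prop :=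
  Relation.ReflTransGen (fun a b => (a, b) ∈ D) u v

/-- `V'` is an ancestral subset: it contains all ancestors of its members. -/
def Ancestral {n : ℕ} (D : Finset (Fin n × Fin n)) (V' : Finset (Fin n)) : Prop :=
  ∀ u v : Fin n, IsAncestor D u v → v ∈ V' → u ∈ V'

/-- The parents of `v`. -/
def paF {n : ℕ} (D : Finset (Fin n × Fin n)) (v : Fin n) : Finset (Fin n) :=
  Finset.univ.filter fun w => (w, v) ∈ D

/-- `htr D B v`: the set of vertices `w ∉ {v} ∪ sib(v)` reachable from `v` by a half-trek. -/
def htr {n : ℕ} (D B : Finset (Fin n × Fin n)) (v : Fin n) : Set (Fin n) :=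
  {w | w ≠ v ∧ (v, w) ∉ B ∧ ∃ R, IsTrek D B v w [v] R}

/-- `Y` satisfies the half-trek criterion with respect to `v`: `|Y| = |pa(v)|`,
`Y ∩ ({v} ∪ sib(v)) = ∅`, and there is a system of half-treks with no sided intersection
from `Y` to `pa(v)` (given by a source `src p ∈ Y` and a right side `R p` for each parent
`p`, with pairwise distinct sources and pairwise disjoint right sides). -/
def SatisfiesHTC {n : ℕ} (D B : Finset (Fin n × Fin n)) (v : Fin n)
    (Y : Finset (Fin n)) : Prop :=
  Y.card = (paF D v).card ∧
    (∀ y ∈ Y, y ≠ v ∧ (y, v) ∉ B) ∧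
    ∃ (src : Fin n → Fin n) (R : Fin n → List (Fin n)),
      (∀ p ∈ paF D v, src p ∈ Y ∧ IsTrek D B (src p) p [src p] (R p)) ∧
      ∀ p ∈ paF D v, ∀ q ∈ paF D v, p ≠ q →
        src p ≠ src q ∧ ∀ x ∈ R p, x ∉ R q

/-- The parameter space `Θ = ℝ^D × PD(B)`. -/
def Theta {α : Type} [Fintype α] (D B : Set (α × α)) :
    Set (Matrix α α ℝ × Matrix α α ℝ) :=
  {p : Matrix α α ℝ × Matrix α α ℝ |
    (∀ v w : α, p.1 v w ≠ 0 → (v, w) ∈ D) ∧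
      p.2.PosDef ∧ ∀ v w : α, v ≠ w → p.2 v w ≠ 0 → (v, w) ∈ B}

/-- The parameterization map `φ(Λ, Ω) = (I - Λ)⁻ᵀ Ω (I - Λ)⁻¹`. -/
noncomputable def phi {α : Type} [Fintype α] [DecidableEq α]
    (p : Matrix α α ℝ × Matrix α α ℝ) : Matrix α α ℝ :=
  ((1 - p.1)⁻¹)ᵀ * p.2 * (1 - p.1)⁻¹

/-- Evaluation of a polynomial in the entries of the two parameter matrices. -/
noncomputable def polyEval {α : Type} [Fintype α]
    (f : MvPolynomial ((α × α) ⊕ (α × α)) ℝ)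
    (p : Matrix α α ℝ × Matrix α α ℝ) : ℝ :=
  MvPolynomial.eval (Sum.elim (fun e => p.1 e.1 e.2) (fun e => p.2 e.1 e.2)) f

/-- `A` is a proper algebraic subset of `Θ`: the intersection of `Θ` with the zero set of a
polynomial in the matrix entries that does not vanish identically on `Θ`. -/
def IsProperAlg {α : Type} [Fintype α]
    (Θ A : Set (Matrix α α ℝ × Matrix α α ℝ)) : Prop :=
  ∃ f : MvPolynomial ((α × α) ⊕ (α × α)) ℝ,
    (∃ p ∈ Θ, polyEval f p ≠ 0) ∧ A = {p ∈ Θ | polyEval f p = 0}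

/-- Generic identifiability: `φ` is injective off a proper algebraic subset. -/
def GenId {α : Type} [Fintype α] [DecidableEq α] (D B : Set (α × α)) : Prop :=
  ∃ A, IsProperAlg (Theta D B) A ∧
    ∀ p ∈ Theta D B \ A, ∀ q ∈ Theta D B \ A, phi p = phi q → p = q

/-- Generic identifiability of the single coefficient `λ_{uv}`. -/
def GenIdLambda {α : Type} [Fintype α] [DecidableEq α] (D B : Set (α × α))
    (u v : α) : Prop :=
  ∃ A, IsProperAlg (Theta D B) A ∧
    ∀ p ∈ Theta D B \ A, ∀ q ∈ Theta D B \ A, phi p = phi q → p.1 u v = q.1 u v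

/-- Generic identifiability of the single coefficient `ω_{uv}`. -/
def GenIdOmega {α : Type} [Fintype α] [DecidableEq α] (D B : Set (α × α))
    (u v : α) : Prop :=
  ∃ A, IsProperAlg (Theta D B) A ∧
    ∀ p ∈ Theta D B \ A, ∀ q ∈ Theta D B \ A, phi p = phi q → p.2 u v = q.2 u v

/-- Generic identifiability of the coefficient vector `Λ_{pa(v), v}`. -/
def GenIdCol {α : Type} [Fintype α] [DecidableEq α] (D B : Set (α × α))
    (v : α) : Prop :=
  ∃ A, IsProperAlg (Theta D B) A ∧
    ∀ p ∈ Theta D B \ A, ∀ q ∈ Theta D B \ A, phi p = phi q →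
      ∀ u : α, (u, v) ∈ D → p.1 u v = q.1 u v

/-- The fiber of the parameter point `p` within `Θ`. -/
def fiber {α : Type} [Fintype α] [DecidableEq α] (D B : Set (α × α))
    (p : Matrix α α ℝ × Matrix α α ℝ) :
    Set (Matrix α α ℝ × Matrix α α ℝ) :=
  {q ∈ Theta D B | phi q = phi p}

/-- Generically infinite-to-one. -/
def GenInfToOne {α : Type} [Fintype α] [DecidableEq α] (D B : Set (α × α)) : Prop :=
  ∃ A, IsProperAlg (Theta D B) A ∧
    ∀ p ∈ Theta D B \ A, (fiber D B p).Infinite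

/-- Generically `h`-to-one: every fiber off a proper algebraic subset has exactly `h` points. -/
def GenHToOne {α : Type} [Fintype α] [DecidableEq α] (D B : Set (α × α))
    (h : ℕ) : Prop :=
  ∃ A, IsProperAlg (Theta D B) A ∧
    ∀ p ∈ Theta D B \ A, (fiber D B p).Finite ∧ (fiber D B p).ncard = h

/-- `w` lies in the connected component of `c` in the bidirected part `(V, B)`. -/
def bidirConn {n : ℕ} (B : Finset (Fin n × Fin n)) (c w : Fin n) : Prop :=
  Relation.ReflTransGen (fun a b => (a, b) ∈ B) c w

/-- The connected component `C` of `c` in the bidirected part. -/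
noncomputable def Cset {n : ℕ} (B : Finset (Fin n × Fin n)) (c : Fin n) :
    Finset (Fin n) :=
  Finset.univ.filter (bidirConn B c)

/-- The vertex set `V_i = C_i ∪ pa(C_i)` of the mixed component of `c`. -/
noncomputable def Vset {n : ℕ} (D B : Finset (Fin n × Fin n)) (c : Fin n) :
    Finset (Fin n) :=
  Cset B c ∪ Finset.univ.filter fun v => ∃ w ∈ Cset B c, (v, w) ∈ D

/-- The directed edges `D_i = {(v, w) ∈ D : v ∈ V_i, w ∈ C_i}` of the mixed component of `c`. -/
def compD {n : ℕ} (D B : Finset (Fin n × Fin n)) (c : Fin n) :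
    Set (↥(Vset D B c) × ↥(Vset D B c)) :=
  {e | ((e.1 : Fin n), (e.2 : Fin n)) ∈ D ∧ (e.2 : Fin n) ∈ Cset B c}

/-- The bidirected edges `B_i = {(v, w) ∈ B : v, w ∈ C_i}` of the mixed component of `c`. -/
def compB {n : ℕ} (D B : Finset (Fin n × Fin n)) (c : Fin n) :
    Set (↥(Vset D B c) × ↥(Vset D B c)) :=
  {e | ((e.1 : Fin n), (e.2 : Fin n)) ∈ B ∧ (e.1 : Fin n) ∈ Cset B c ∧
    (e.2 : Fin n) ∈ Cset B c}

/-- The edges of the induced subgraph `G_{V'}`, as pairs of vertices of the subtype `V'`. -/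
def inducedE {n : ℕ} (E : Finset (Fin n × Fin n)) (V' : Finset (Fin n)) :
    Set (↥V' × ↥V') :=
  {e | ((e.1 : Fin n), (e.2 : Fin n)) ∈ E}


section AuxStmt6

lemma aux_sum_ext {n : ℕ} (V' : Finset (Fin n)) (f : Fin n → ℝ)
    (hf : ∀ x, x ∉ V' → f x = 0) : ∑ x, f x = ∑ x : ↥V', f ↑x := by
  rw [← Finset.sum_subtype V' (fun x => Iff.rfl) f]
  exact (Finset.sum_subset (Finset.subset_univ _) fun x _ hx => hf x hx).symm

lemma aux_pow_eq_zero {α : Type} [Fintype α] [DecidableEq α]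
    (M : Matrix α α ℝ) (r : α → ℕ) (N : ℕ)
    (hr : ∀ a b, M a b ≠ 0 → r a < r b) (hb : ∀ a, r a < N) :
    M ^ N = 0 := by
  have key : ∀ k (x y : α), (M ^ k) x y ≠ 0 → r x + k ≤ r y := by
    intro k
    induction k with
    | zero =>
      intro x y h
      rw [pow_zero] at h
      rcases eq_or_ne x y with rfl | hne
      · omega
      · exact absurd (Matrix.one_apply_ne hne) h
    | succ k ih =>
      intro x y h
      rw [pow_succ, Matrix.mul_apply] at h
      obtain ⟨z, _, hz⟩ := Finset.exists_ne_zero_of_sum_ne_zero h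
      have h1 := ih x z (left_ne_zero_of_mul hz)
      have h2 := hr z y (right_ne_zero_of_mul hz)
      omega
  ext x y
  rw [Matrix.zero_apply]
  by_contra h
  have := key N x y h
  have := hb y
  omega

noncomputable def rkD {n : ℕ} (D : Finset (Fin n × Fin n)) (v : Fin n) : ℕ :=
  (Finset.univ.filter fun w => Relation.TransGen (fun a b => (a, b) ∈ D) w v).card

lemma rkD_lt_of_edge {n : ℕ} {D : Finset (Fin n × Fin n)} (hacyc : Acyclic D)
    {a b : Fin n} (h : (a, b) ∈ D) : rkD D a < rkD D b := by
  apply Finset.card_lt_card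
  rw [Finset.ssubset_iff_of_subset]
  · exact ⟨a, Finset.mem_filter.2 ⟨Finset.mem_univ _, Relation.TransGen.single h⟩,
      fun ha => hacyc a (Finset.mem_filter.1 ha).2⟩
  · intro w hw
    rw [Finset.mem_filter] at hw ⊢
    exact ⟨hw.1, hw.2.tail h⟩

lemma rkD_lt {n : ℕ} {D : Finset (Fin n × Fin n)} (hacyc : Acyclic D) (v : Fin n) :
    rkD D v < n := by
  have h1 : (Finset.univ.filter fun w =>
      Relation.TransGen (fun a b => (a, b) ∈ D) w v) ⊂ Finset.univ := by
    rw [Finset.ssubset_univ_iff]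
    intro hEq
    have hv : v ∈ Finset.univ.filter fun w =>
        Relation.TransGen (fun a b => (a, b) ∈ D) w v := by
      rw [hEq]; exact Finset.mem_univ v
    exact hacyc v (Finset.mem_filter.1 hv).2
  have := Finset.card_lt_card h1
  simpa [rkD, Finset.card_univ] using this

lemma isUnit_det_one_sub {α : Type} [Fintype α] [DecidableEq α]
    {M : Matrix α α ℝ} {N : ℕ} (h : M ^ N = 0) : IsUnit (1 - M).det :=
  (Matrix.isUnit_iff_isUnit_det _).1 (IsNilpotent.isUnit_one_sub ⟨N, h⟩)

lemma lam_nilpotent {n : ℕ} {D : Finset (Fin n × Fin n)} (hacyc : Acyclic D)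
    {Λ : Matrix (Fin n) (Fin n) ℝ} (hs : ∀ v w, Λ v w ≠ 0 → (v, w) ∈ D) :
    Λ ^ n = 0 :=
  aux_pow_eq_zero Λ (rkD D) n (fun a b h => rkD_lt_of_edge hacyc (hs a b h))
    (fun a => rkD_lt hacyc a)

lemma lam_nilpotent_sub {n : ℕ} {D : Finset (Fin n × Fin n)} (hacyc : Acyclic D)
    {V' : Finset (Fin n)} {Λ : Matrix ↥V' ↥V' ℝ}
    (hs : ∀ v w : ↥V', Λ v w ≠ 0 → ((v : Fin n), (w : Fin n)) ∈ D) :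
    Λ ^ n = 0 :=
  aux_pow_eq_zero Λ (fun a => rkD D ↑a) n (fun a b h => rkD_lt_of_edge hacyc (hs a b h))
    (fun a => rkD_lt hacyc ↑a)

end AuxStmt6
lemma inv_block {n : ℕ} (V' : Finset (Fin n)) (Λ : Matrix (Fin n) (Fin n) ℝ)
    (hblock : ∀ x a : Fin n, x ∉ V' → a ∈ V' → Λ x a = 0)
    (hP : IsUnit (1 - Λ).det)
    (hP' : IsUnit (1 - Λ.submatrix (Subtype.val : ↥V' → Fin n) Subtype.val).det) :
    ∀ (x : Fin n) (b : ↥V'),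
      (1 - Λ)⁻¹ x ↑b =
        if hx : x ∈ V' then
          (1 - Λ.submatrix (Subtype.val : ↥V' → Fin n) Subtype.val)⁻¹ ⟨x, hx⟩ b
        else 0 := by
  set P : Matrix (Fin n) (Fin n) ℝ := 1 - Λ with hPdef
  set P' : Matrix ↥V' ↥V' ℝ := 1 - Λ.submatrix Subtype.val Subtype.val with hP'def
  set Q := P⁻¹ with hQdef
  set Q' := P'⁻¹ with hQ'def
  have hPP' : ∀ (y x : ↥V'), P' y x = P (↑y) (↑x) := by
    intro y x
    simp only [hPdef, hP'def, Matrix.sub_apply, Matrix.submatrix_apply, Matrix.one_apply]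
    congr 1
    by_cases h : y = x
    · simp [h]
    · rw [if_neg h, if_neg (fun hc => h (Subtype.ext hc))]
  have hPzero : ∀ (y x : Fin n), y ∉ V' → x ∈ V' → P y x = 0 := by
    intro y x hy hx
    have hyx : y ≠ x := fun h => hy (h ▸ hx)
    simp [hPdef, Matrix.sub_apply, Matrix.one_apply_ne hyx, hblock y x hy hx]
  set C : Matrix (Fin n) (Fin n) ℝ := fun x b =>
    if hb : b ∈ V' then (if hx : x ∈ V' then Q' ⟨x, hx⟩ ⟨b, hb⟩ else 0) else Q x b with hCdef
  have hCzero : ∀ x b, b ∈ V' → x ∉ V' → C x b = 0 := by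
    intro x b hb hx; simp [hCdef, hb, hx]
  have hCin : ∀ (x b : ↥V'), C ↑x ↑b = Q' x b := by
    intro x b; simp [hCdef, x.2, b.2]
  have hCout : ∀ x b, b ∉ V' → C x b = Q x b := by
    intro x b hb; simp [hCdef, hb]
  have hPC : P * C = 1 := by
    ext y b
    rw [Matrix.mul_apply]
    by_cases hb : b ∈ V'
    · by_cases hy : y ∈ V'
      · have h1 : ∑ x ∈ V', P y x * C x b = ∑ x, P y x * C x b :=
          Finset.sum_subset (Finset.subset_univ _)
            (fun x _ hx => by rw [hCzero x b hb hx, mul_zero])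
        rw [← h1, Finset.sum_subtype V' (fun x => Iff.rfl) (fun x => P y x * C x b)]
        have h3 : ∑ x : ↥V', P y ↑x * C ↑x b = ∑ x : ↥V', P' ⟨y, hy⟩ x * Q' x ⟨b, hb⟩ :=
          Finset.sum_congr rfl fun x _ => by rw [hPP', hCin x ⟨b, hb⟩]
        rw [h3, ← Matrix.mul_apply, Matrix.mul_nonsing_inv _ hP']
        by_cases hyb : y = b
        · subst hyb; simp [Matrix.one_apply]
        · rw [Matrix.one_apply_ne (fun h => hyb (Subtype.ext_iff.1 h)),
            Matrix.one_apply_ne hyb]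
      · have h0 : ∀ x ∈ Finset.univ, P y x * C x b = 0 := by
          intro x _
          by_cases hx : x ∈ V'
          · rw [hPzero y x hy hx, zero_mul]
          · rw [hCzero x b hb hx, mul_zero]
        rw [Finset.sum_eq_zero h0, Matrix.one_apply_ne (fun h => hy (by rw [h]; exact hb))]
    · have h0 : ∑ x, P y x * C x b = ∑ x, P y x * Q x b :=
        Finset.sum_congr rfl fun x _ => by rw [hCout x b hb]
      rw [h0, ← Matrix.mul_apply, Matrix.mul_nonsing_inv _ hP]
  have hQC : Q = C := by
    calc Q = Q * (P * C) := by rw [hPC, Matrix.mul_one]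
    _ = Q * P * C := by rw [Matrix.mul_assoc]
    _ = C := by rw [hQdef, Matrix.nonsing_inv_mul _ hP, Matrix.one_mul]
  intro x b
  show Q x ↑b = _
  rw [hQC]
  by_cases hx : x ∈ V'
  · rw [dif_pos hx]
    simpa [hCdef, b.2, hx] using (hCin ⟨x, hx⟩ b)
  · rw [dif_neg hx]
    simp [hCdef, b.2, hx]

lemma phi_block {n : ℕ} (V' : Finset (Fin n)) (Λ Ω : Matrix (Fin n) (Fin n) ℝ)
    (hblock : ∀ x a : Fin n, x ∉ V' → a ∈ V' → Λ x a = 0)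
    (hP : IsUnit (1 - Λ).det)
    (hP' : IsUnit (1 - Λ.submatrix (Subtype.val : ↥V' → Fin n) Subtype.val).det) :
    ∀ a b : ↥V',
      phi (Λ.submatrix (Subtype.val : ↥V' → Fin n) Subtype.val,
           Ω.submatrix (Subtype.val : ↥V' → Fin n) Subtype.val) a b = phi (Λ, Ω) ↑a ↑b := by
  intro a b
  have hQ := inv_block V' Λ hblock hP hP'
  simp only [phi]
  set Ω' : Matrix ↥V' ↥V' ℝ := Ω.submatrix (Subtype.val : ↥V' → Fin n) Subtype.val with hΩ'def
  set Q := (1 - Λ)⁻¹ with hQdef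
  set Q' : Matrix ↥V' ↥V' ℝ := (1 - Λ.submatrix (Subtype.val : ↥V' → Fin n) Subtype.val)⁻¹ with hQ'def
  have hsum : ∀ (c : ↥V') (f : Fin n → ℝ),
      ∑ x, Q x ↑c * f x = ∑ x : ↥V', Q' x c * f ↑x := by
    intro c f
    rw [aux_sum_ext V' _ (fun x hx => by rw [hQ x c, dif_neg hx, zero_mul])]
    refine Finset.sum_congr rfl fun x _ => ?_
    rw [hQ ↑x c, dif_pos x.2, Subtype.coe_eta]
  have hR : (Qᵀ * Ω * Q) ↑a ↑b = ∑ y : ↥V', Q' y b * ∑ x : ↥V', Q' x a * Ω ↑x ↑y := by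
    rw [Matrix.mul_apply]
    rw [Finset.sum_congr rfl (fun y (_ : y ∈ Finset.univ) =>
      mul_comm ((Qᵀ * Ω) ↑a y) (Q y ↑b))]
    rw [hsum b]
    refine Finset.sum_congr rfl fun y _ => ?_
    congr 1
    rw [Matrix.mul_apply]
    rw [Finset.sum_congr rfl (fun x (_ : x ∈ Finset.univ) => by
      rw [Matrix.transpose_apply])]
    exact hsum a _
  have hL : (Q'ᵀ * Ω' * Q') a b =
      ∑ y : ↥V', Q' y b * ∑ x : ↥V', Q' x a * Ω ↑x ↑y := by
    rw [Matrix.mul_apply]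
    refine Finset.sum_congr rfl fun y _ => ?_
    rw [Matrix.mul_apply, mul_comm]
    congr 1
  exact hL.trans hR.symm
lemma posdef_res {n : ℕ} (V' : Finset (Fin n)) {Ω : Matrix (Fin n) (Fin n) ℝ}
    (h : Ω.PosDef) :
    (Ω.submatrix (Subtype.val : ↥V' → Fin n) Subtype.val).PosDef := by
  refine Matrix.PosDef.of_dotProduct_mulVec_pos (h.1.submatrix _) fun x hx => ?_
  set x' : Fin n → ℝ := fun i => if hi : i ∈ V' then x ⟨i, hi⟩ else 0 with hx'def
  have hx'0 : ∀ i, i ∉ V' → x' i = 0 := fun i hi => by simp [hx'def, hi]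
  have hx'c : ∀ i : ↥V', x' ↑i = x i := fun i => by simp [hx'def, i.2]
  have hx' : x' ≠ 0 := by
    obtain ⟨a, ha⟩ := Function.ne_iff.1 hx
    exact fun h0 => ha (by rw [← hx'c a, h0]; rfl)
  have hpos := h.dotProduct_mulVec_pos hx'
  have hmv : ∀ i : ↥V',
      (Ω *ᵥ x') ↑i = ((Ω.submatrix (Subtype.val : ↥V' → Fin n) Subtype.val) *ᵥ x) i := by
    intro i
    simp only [Matrix.mulVec, dotProduct, Matrix.submatrix_apply]
    rw [aux_sum_ext V' _ (fun j hj => by rw [hx'0 j hj, mul_zero])]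
    exact Finset.sum_congr rfl fun j _ => by rw [hx'c j]
  have hdd : dotProduct (star x') (Ω *ᵥ x') =
      dotProduct (star x)
        ((Ω.submatrix (Subtype.val : ↥V' → Fin n) Subtype.val) *ᵥ x) := by
    simp only [dotProduct, Pi.star_apply, star_trivial]
    rw [aux_sum_ext V' _ (fun i hi => by rw [hx'0 i hi, zero_mul])]
    exact Finset.sum_congr rfl fun i _ => by rw [hx'c i, hmv i]
  rw [← hdd]
  exact hpos

noncomputable def extM {n : ℕ} (V' : Finset (Fin n)) (M : Matrix ↥V' ↥V' ℝ) (d : ℝ) :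
    Matrix (Fin n) (Fin n) ℝ :=
  fun x y =>
    if hx : x ∈ V' then (if hy : y ∈ V' then M ⟨x, hx⟩ ⟨y, hy⟩ else 0)
    else if x = y then d else 0

lemma extM_res {n : ℕ} (V' : Finset (Fin n)) (M : Matrix ↥V' ↥V' ℝ) (d : ℝ) :
    (extM V' M d).submatrix (Subtype.val : ↥V' → Fin n) Subtype.val = M := by
  ext a b
  simp [extM, a.2, b.2]

lemma extM_support {n : ℕ} (V' : Finset (Fin n)) (M : Matrix ↥V' ↥V' ℝ) (d : ℝ)
    {x y : Fin n} (hxy : x ≠ y) (h : extM V' M d x y ≠ 0) :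
    ∃ (hx : x ∈ V') (hy : y ∈ V'), M ⟨x, hx⟩ ⟨y, hy⟩ ≠ 0 := by
  by_cases hx : x ∈ V'
  · by_cases hy : y ∈ V'
    · exact ⟨hx, hy, by simpa [extM, hx, hy] using h⟩
    · exact absurd (by simp [extM, hx, hy]) h
  · exact absurd (by simp [extM, hx, hxy]) h

lemma extM_support0 {n : ℕ} (V' : Finset (Fin n)) (M : Matrix ↥V' ↥V' ℝ)
    {x y : Fin n} (h : extM V' M 0 x y ≠ 0) :
    ∃ (hx : x ∈ V') (hy : y ∈ V'), M ⟨x, hx⟩ ⟨y, hy⟩ ≠ 0 := by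
  by_cases hx : x ∈ V'
  · by_cases hy : y ∈ V'
    · exact ⟨hx, hy, by simpa [extM, hx, hy] using h⟩
    · exact absurd (by simp [extM, hx, hy]) h
  · exact absurd (by simp [extM, hx]) h

lemma extM_posdef {n : ℕ} (V' : Finset (Fin n)) {M : Matrix ↥V' ↥V' ℝ} (h : M.PosDef) :
    (extM V' M 1).PosDef := by
  refine Matrix.PosDef.of_dotProduct_mulVec_pos ?_ ?_
  · have hsym : ∀ (a b : ↥V'), M a b = M b a := by
      intro a b
      have h1 : Mᴴ a b = M a b := by rw [h.1]
      rw [Matrix.conjTranspose_apply, star_trivial] at h1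
      exact h1.symm
    ext i j
    rw [Matrix.conjTranspose_apply, star_trivial]
    by_cases hi : i ∈ V' <;> by_cases hj : j ∈ V'
    · show extM V' M 1 j i = extM V' M 1 i j
      simp only [extM, dif_pos hi, dif_pos hj]
      exact hsym _ _
    · show extM V' M 1 j i = extM V' M 1 i j
      simp only [extM, dif_pos hi, dif_neg hj]
      rw [if_neg (show j ≠ i from fun hc => hj (by rw [hc]; exact hi))]
    · show extM V' M 1 j i = extM V' M 1 i j
      simp only [extM, dif_neg hi, dif_pos hj]
      rw [if_neg (show i ≠ j from fun hc => hi (by rw [hc]; exact hj))]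
    · show extM V' M 1 j i = extM V' M 1 i j
      simp only [extM, dif_neg hi, dif_neg hj]
      by_cases hij : i = j
      · simp [hij]
      · rw [if_neg hij, if_neg (fun hc => hij hc.symm)]
  · intro x hx
    set xr : ↥V' → ℝ := fun j => x ↑j with hxr
    have hmv1 : ∀ (i : Fin n) (hi : i ∈ V'), (extM V' M 1 *ᵥ x) i = (M *ᵥ xr) ⟨i, hi⟩ := by
      intro i hi
      simp only [Matrix.mulVec, dotProduct]
      rw [aux_sum_ext V' _ (fun j hj => by simp [extM, hi, hj])]
      refine Finset.sum_congr rfl fun j _ => ?_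
      simp only [extM, dif_pos hi, dif_pos j.2, Subtype.coe_eta, hxr]
    have hmv2 : ∀ i, i ∉ V' → (extM V' M 1 *ᵥ x) i = x i := by
      intro i hi
      simp only [Matrix.mulVec, dotProduct]
      rw [Finset.sum_congr rfl (fun j (_ : j ∈ Finset.univ) => by
        rw [show extM V' M 1 i j = if i = j then 1 else 0 from dif_neg hi])]
      simp
    have hsplit := Finset.sum_add_sum_compl V' fun i => star (x i) * (extM V' M 1 *ᵥ x) i
    have hgoal : dotProduct (star x) (extM V' M 1 *ᵥ x) =
        ∑ i, star (x i) * (extM V' M 1 *ᵥ x) i := rfl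
    have hfirst : ∑ i ∈ V', star (x i) * (extM V' M 1 *ᵥ x) i =
        dotProduct (star xr) (M *ᵥ xr) := by
      have hd : dotProduct (star xr) (M *ᵥ xr) =
          ∑ i : ↥V', star (xr i) * (M *ᵥ xr) i := rfl
      rw [hd, Finset.sum_subtype V' (fun _ => Iff.rfl)]
      refine Finset.sum_congr rfl fun i _ => ?_
      rw [hmv1 ↑i i.2, Subtype.coe_eta]
    have hsecond : ∑ i ∈ V'ᶜ, star (x i) * (extM V' M 1 *ᵥ x) i = ∑ i ∈ V'ᶜ, x i * x i := by
      refine Finset.sum_congr rfl fun i hi => ?_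
      rw [hmv2 i (Finset.mem_compl.1 hi), star_trivial]
    rw [hfirst, hsecond] at hsplit
    rw [hgoal, ← hsplit]
    by_cases hxr0 : xr = 0
    · have h1 : dotProduct (star xr) (M *ᵥ xr) = 0 := by rw [hxr0]; simp
      obtain ⟨a, ha⟩ := Function.ne_iff.1 hx
      have haV : a ∉ V' := by
        intro haV
        exact ha (by have := congrFun hxr0 ⟨a, haV⟩; simpa [hxr] using this)
      have h2 : 0 < ∑ i ∈ V'ᶜ, x i * x i :=
        Finset.sum_pos' (fun i _ => mul_self_nonneg _)
          ⟨a, Finset.mem_compl.2 haV, mul_self_pos.2 ha⟩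
      rw [h1]
      linarith
    · have h1 := h.dotProduct_mulVec_pos hxr0
      have h2 : 0 ≤ ∑ i ∈ V'ᶜ, x i * x i := Finset.sum_nonneg fun i _ => mul_self_nonneg _
      linarith
noncomputable def resP {n : ℕ} (V' : Finset (Fin n))
    (p : Matrix (Fin n) (Fin n) ℝ × Matrix (Fin n) (Fin n) ℝ) :
    Matrix ↥V' ↥V' ℝ × Matrix ↥V' ↥V' ℝ :=
  (p.1.submatrix (Subtype.val : ↥V' → Fin n) Subtype.val,
   p.2.submatrix (Subtype.val : ↥V' → Fin n) Subtype.val)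

lemma master {n : ℕ} (D B : Finset (Fin n × Fin n)) (hacyc : Acyclic D)
    (V' : Finset (Fin n)) (hanc : Ancestral D V')
    (A' : Set (Matrix ↥V' ↥V' ℝ × Matrix ↥V' ↥V' ℝ))
    (hA' : IsProperAlg (Theta (inducedE D V') (inducedE B V')) A') :
    ∃ A, IsProperAlg (Theta (↑D : Set (Fin n × Fin n)) ↑B) A ∧
      ∀ p ∈ Theta (↑D : Set (Fin n × Fin n)) ↑B \ A,
        resP V' p ∈ Theta (inducedE D V') (inducedE B V') \ A' ∧
        ∀ q ∈ Theta (↑D : Set (Fin n × Fin n)) ↑B \ A,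
          phi p = phi q → phi (resP V' p) = phi (resP V' q) := by
  obtain ⟨f', ⟨p', hp'Θ, hp'ne⟩, hA'eq⟩ := hA'
  set ι : ((↥V' × ↥V') ⊕ (↥V' × ↥V')) → ((Fin n × Fin n) ⊕ (Fin n × Fin n)) :=
    Sum.map (fun e => ((e.1 : Fin n), (e.2 : Fin n)))
      (fun e => ((e.1 : Fin n), (e.2 : Fin n))) with hι
  set f : MvPolynomial ((Fin n × Fin n) ⊕ (Fin n × Fin n)) ℝ :=
    MvPolynomial.rename ι f' with hf
  have heval : ∀ p, polyEval f p = polyEval f' (resP V' p) := by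
    intro p
    simp only [polyEval, hf, MvPolynomial.eval_rename]
    refine congrArg (fun g => MvPolynomial.eval g f') ?_
    funext e
    cases e with
    | inl e => simp [hι, resP]
    | inr e => simp [hι, resP]
  have hres : ∀ p ∈ Theta (↑D : Set (Fin n × Fin n)) ↑B,
      resP V' p ∈ Theta (inducedE D V') (inducedE B V') := by
    rintro p ⟨h1, h2, h3⟩
    refine ⟨?_, posdef_res V' h2, ?_⟩
    · intro a b hne
      have := h1 ↑a ↑b (by simpa [resP] using hne)
      simpa [inducedE] using this
    · intro a b hab hne
      have := h3 ↑a ↑b (fun hc => hab (Subtype.ext hc)) (by simpa [resP] using hne)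
      simpa [inducedE] using this
  set pe : Matrix (Fin n) (Fin n) ℝ × Matrix (Fin n) (Fin n) ℝ :=
    (extM V' p'.1 0, extM V' p'.2 1) with hpe
  have hpeΘ : pe ∈ Theta (↑D : Set (Fin n × Fin n)) ↑B := by
    obtain ⟨h1, h2, h3⟩ := hp'Θ
    refine ⟨?_, extM_posdef V' h2, ?_⟩
    · intro v w hvw
      obtain ⟨hv, hw, hne⟩ := extM_support0 V' p'.1 hvw
      have := h1 ⟨v, hv⟩ ⟨w, hw⟩ hne
      simpa [inducedE] using this
    · intro v w hvw hne
      obtain ⟨hv, hw, hne'⟩ := extM_support V' p'.2 1 hvw hne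
      have := h3 ⟨v, hv⟩ ⟨w, hw⟩ (fun hc => hvw (congrArg Subtype.val hc)) hne'
      simpa [inducedE] using this
  have hpe_res : resP V' pe = p' := by
    simp only [resP, hpe, extM_res]
  have hdet : ∀ r ∈ Theta (↑D : Set (Fin n × Fin n)) ↑B, IsUnit (1 - r.1).det := by
    intro r hr
    exact isUnit_det_one_sub
      (lam_nilpotent hacyc (fun vv ww hne => Finset.mem_coe.1 (hr.1 vv ww hne)))
  have hdet' : ∀ r ∈ Theta (↑D : Set (Fin n × Fin n)) ↑B,
      IsUnit (1 - r.1.submatrix (Subtype.val : ↥V' → Fin n) Subtype.val).det := by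
    intro r hr
    refine isUnit_det_one_sub (lam_nilpotent_sub hacyc ?_)
    intro vv ww hne
    exact Finset.mem_coe.1 (hr.1 ↑vv ↑ww (by simpa using hne))
  refine ⟨{p ∈ Theta (↑D : Set (Fin n × Fin n)) ↑B | polyEval f p = 0},
    ⟨f, ⟨pe, hpeΘ, by rw [heval, hpe_res]; exact hp'ne⟩, rfl⟩, ?_⟩
  rintro p ⟨hpΘ, hpA⟩
  have hpne : polyEval f p ≠ 0 := fun hc => hpA ⟨hpΘ, hc⟩
  constructor
  · refine ⟨hres p hpΘ, ?_⟩
    rw [hA'eq]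
    rintro ⟨-, h0⟩
    exact hpne (by rw [heval]; exact h0)
  · rintro q ⟨hqΘ, -⟩ hpq
    have hblockp : ∀ x a : Fin n, x ∉ V' → a ∈ V' → p.1 x a = 0 := by
      intro x a hx ha
      by_contra hne
      exact hx (hanc x a (Relation.ReflTransGen.single (Finset.mem_coe.1 (hpΘ.1 x a hne))) ha)
    have hblockq : ∀ x a : Fin n, x ∉ V' → a ∈ V' → q.1 x a = 0 := by
      intro x a hx ha
      by_contra hne
      exact hx (hanc x a (Relation.ReflTransGen.single (Finset.mem_coe.1 (hqΘ.1 x a hne))) ha)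
    have h1 : ∀ a b : ↥V', phi (resP V' p) a b = phi p ↑a ↑b := fun a b =>
      phi_block V' p.1 p.2 hblockp (hdet p hpΘ) (hdet' p hpΘ) a b
    have h2 : ∀ a b : ↥V', phi (resP V' q) a b = phi q ↑a ↑b := fun a b =>
      phi_block V' q.1 q.2 hblockq (hdet q hqΘ) (hdet' q hqΘ) a b
    funext a b
    rw [h1 a b, h2 a b, hpq]
theorem stmt6 (n : ℕ) (D B : Finset (Fin n × Fin n))
    (hG : IsMixedGraph D B) (hacyc : Acyclic D)
    (V' : Finset (Fin n)) (hanc : Ancestral D V')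
    (u v : Fin n) (hu : u ∈ V') (hv : v ∈ V') :
    ((u, v) ∈ D →
      GenIdLambda (inducedE D V') (inducedE B V') ⟨u, hu⟩ ⟨v, hv⟩ →
        GenIdLambda (↑D : Set (Fin n × Fin n)) ↑B u v) ∧
    ((u, v) ∈ B →
      GenIdOmega (inducedE D V') (inducedE B V') ⟨u, hu⟩ ⟨v, hv⟩ →
        GenIdOmega (↑D : Set (Fin n × Fin n)) ↑B u v) := by
  constructor
  · rintro - ⟨A', hA', hid⟩
    obtain ⟨A, hA, hm⟩ := master D B hacyc V' hanc A' hA'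
    refine ⟨A, hA, fun p hp q hq hpq => ?_⟩
    obtain ⟨hp', hrest⟩ := hm p hp
    obtain ⟨hq', -⟩ := hm q hq
    have := hid _ hp' _ hq' (hrest q hq hpq)
    simpa [resP, Matrix.submatrix_apply] using this
  · rintro - ⟨A', hA', hid⟩
    obtain ⟨A, hA, hm⟩ := master D B hacyc V' hanc A' hA'
    refine ⟨A, hA, fun p hp q hq hpq => ?_⟩
    obtain ⟨hp', hrest⟩ := hm p hp
    obtain ⟨hq', -⟩ := hm q hq
    have := hid _ hp' _ hq' (hrest q hq hpq)
    simpa [resP, Matrix.submatrix_apply] using this
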